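/- Let L ≥ 1, let μ_1, ..., μ_L be pairwise distinct positive real numbers and t_1, ..., t_L be pairwise distinct positive real numbers. Then the L × L real matrix J' with entries J'(i, j) = 1 − exp(−μ_i · t_j) is invertible. -/

import Mathlib

set_option autoImplicit false

open Finset in
/-- An exponential sum with `n` distinct exponents vanishing at `n` distinct points
has all coefficients zero. -/
lemma exp_sum_coeffs_eq_zero : ∀ (n : ℕ) (lam a : Fin n → ℝ),
    Function.Injective lam → ∀ S : Finset ℝ, n ≤ S.card →
    (∀ x ∈ S, ∑ k, a k * Real.exp (lam k * x) = 0) → ∀ k, a k = 0 := by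
  intro n
  induction n with
  | zero => intro lam a _ S _ _ k; exact k.elim0
  | succ n ih =>
    intro lam a hlam S hcard hvan
    -- take a subset of card exactly n+1
    obtain ⟨T, hTS, hT⟩ := Finset.exists_subset_card_eq hcard
    have hvanT : ∀ x ∈ T, ∑ k, a k * Real.exp (lam k * x) = 0 :=
      fun x hx => hvan x (hTS hx)
    -- sorted enumeration of T
    let e : Fin (n + 1) → ℝ := T.orderEmbOfFin hT
    have he : StrictMono e := (T.orderEmbOfFin hT).strictMono
    have heT : ∀ i, e i ∈ T := fun i => T.orderEmbOfFin_mem hT i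
    -- the auxiliary function h
    set h : ℝ → ℝ := fun x => ∑ k, a k * Real.exp ((lam k - lam 0) * x) with hh
    have hzero : ∀ x ∈ T, h x = 0 := by
      intro x hx
      have : h x = Real.exp (-(lam 0) * x) * ∑ k, a k * Real.exp (lam k * x) := by
        rw [Finset.mul_sum]
        refine Finset.sum_congr rfl fun k _ => ?_
        rw [show (lam k - lam 0) * x = -lam 0 * x + lam k * x by ring, Real.exp_add]
        ring
      rw [this, hvanT x hx, mul_zero]
    have hderiv : ∀ x : ℝ, HasDerivAt h
        (∑ k, (a k * (lam k - lam 0)) * Real.exp ((lam k - lam 0) * x)) x := by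
      intro x
      have : ∀ k : Fin (n+1), HasDerivAt (fun y => a k * Real.exp ((lam k - lam 0) * y))
          ((a k * (lam k - lam 0)) * Real.exp ((lam k - lam 0) * x)) x := by
        intro k
        have h1 : HasDerivAt (fun y : ℝ => (lam k - lam 0) * y) (lam k - lam 0) x := by
          simpa using (hasDerivAt_id x).const_mul (lam k - lam 0)
        have h2 := (h1.exp).const_mul (a k)
        convert h2 using 1
        · rfl
        · rfl
        · ring
      simpa using HasDerivAt.fun_sum (fun k _ => this k)
    -- Rolle: between consecutive points get zeros of the derivative
    have hRolle : ∀ i : Fin n, ∃ c ∈ Set.Ioo (e i.castSucc) (e i.succ),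
        ∑ k, (a k * (lam k - lam 0)) * Real.exp ((lam k - lam 0) * c) = 0 := by
      intro i
      have hlt : e i.castSucc < e i.succ := he (Fin.castSucc_lt_succ (i := i))
      have hcont : ContinuousOn h (Set.Icc (e i.castSucc) (e i.succ)) := by
        apply Continuous.continuousOn
        fun_prop
      have heq : h (e i.castSucc) = h (e i.succ) := by
        rw [hzero _ (heT _), hzero _ (heT _)]
      obtain ⟨c, hc, hc'⟩ := exists_deriv_eq_zero hlt hcont heq
      refine ⟨c, hc, ?_⟩
      have := (hderiv c).deriv
      rw [← this, hc']
    choose c hc hc' using hRolle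
    have hcmono : StrictMono c := by
      intro i j hij
      calc c i < e i.succ := (hc i).2
        _ ≤ e j.castSucc := he.monotone (by
            simp [Fin.le_def]
            omega)
        _ < c j := (hc j).1
    -- apply IH to the derivative
    set lam' : Fin n → ℝ := fun k => lam k.succ - lam 0 with hlam'
    set a' : Fin n → ℝ := fun k => a k.succ * (lam k.succ - lam 0) with ha'
    have hlam'inj : Function.Injective lam' := by
      intro i j hij
      have : lam i.succ = lam j.succ := by
        simpa [hlam', sub_left_inj] using hij
      exact Fin.succ_injective _ (hlam this)
    have hS' : n ≤ (Finset.image c Finset.univ).card := by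
      rw [Finset.card_image_of_injective _ hcmono.injective, Finset.card_univ, Fintype.card_fin]
    have hvan' : ∀ x ∈ Finset.image c Finset.univ,
        ∑ k, a' k * Real.exp (lam' k * x) = 0 := by
      intro x hx
      obtain ⟨i, _, rfl⟩ := Finset.mem_image.mp hx
      have := hc' i
      rw [Fin.sum_univ_succ] at this
      simpa [hlam', ha'] using this
    have hsucc : ∀ k : Fin n, a k.succ = 0 := by
      intro k
      have := ih lam' a' hlam'inj _ hS' hvan' k
      rw [ha'] at this
      rcases mul_eq_zero.mp this with h | h
      · exact h
      · exfalso
        have : lam k.succ = lam 0 := by linarith [sub_eq_zero.mp h]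
        exact (Fin.succ_ne_zero k) (hlam this)
    -- finally a 0 = 0
    have h0 : a 0 = 0 := by
      have hmem := heT 0
      have := hvanT _ hmem
      rw [Fin.sum_univ_succ] at this
      have hrest : ∀ k : Fin n, a k.succ * Real.exp (lam k.succ * e 0) = 0 := by
        intro k; rw [hsucc k, zero_mul]
      rw [Finset.sum_congr rfl (fun k _ => hrest k), Finset.sum_const, smul_zero,
        add_zero] at this
      have hexp : Real.exp (lam 0 * e 0) ≠ 0 := Real.exp_ne_zero _
      exact (mul_eq_zero.mp this).resolve_right hexp
    intro k
    refine Fin.cases h0 hsucc k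

/-- The matrix `J'(i,j) = 1 − exp(−μ_i · t_j)` with pairwise distinct positive `μ_i`
and pairwise distinct positive `t_j` is invertible. -/
theorem one_sub_exp_matrix_isUnit (L : ℕ) (hL : 1 ≤ L) (μ t : Fin L → ℝ)
    (hμ : Function.Injective μ) (ht : Function.Injective t)
    (hμpos : ∀ i, 0 < μ i) (htpos : ∀ j, 0 < t j) :
    IsUnit (Matrix.of fun i j : Fin L => 1 - Real.exp (-μ i * t j)) := by
  set M : Matrix (Fin L) (Fin L) ℝ := Matrix.of fun i j => 1 - Real.exp (-μ i * t j) with hM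
  rw [Matrix.isUnit_iff_isUnit_det, isUnit_iff_ne_zero]
  intro hdet
  obtain ⟨v, hv, hMv⟩ := (Matrix.exists_mulVec_eq_zero_iff).mpr hdet
  -- build exponential sum data
  set lam : Fin (L + 1) → ℝ := Fin.cons 0 (fun k => -t k) with hlam
  set a : Fin (L + 1) → ℝ := Fin.cons (∑ j, v j) (fun k => -v k) with ha
  have hlaminj : Function.Injective lam := by
    intro i j hij
    induction i using Fin.cases with
    | zero =>
      induction j using Fin.cases with
      | zero => rfl
      | succ j =>
        exfalso
        simp only [hlam, Fin.cons_zero, Fin.cons_succ] at hij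
        have := htpos j; linarith
    | succ i =>
      induction j using Fin.cases with
      | zero =>
        exfalso
        simp only [hlam, Fin.cons_zero, Fin.cons_succ] at hij
        have := htpos i; linarith
      | succ j =>
        simp only [hlam, Fin.cons_succ, neg_inj] at hij
        exact congrArg Fin.succ (ht hij)
  set S : Finset ℝ := insert 0 (Finset.image μ Finset.univ) with hS
  have hScard : L + 1 ≤ S.card := by
    rw [hS, Finset.card_insert_of_notMem, Finset.card_image_of_injective _ hμ,
      Finset.card_univ, Fintype.card_fin]
    intro h
    obtain ⟨i, _, hi⟩ := Finset.mem_image.mp h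
    exact absurd hi.symm (ne_of_lt (hμpos i))
  have hsum : ∀ x : ℝ, ∑ k, a k * Real.exp (lam k * x)
      = ∑ j, v j * (1 - Real.exp (-t j * x)) := by
    intro x
    rw [Fin.sum_univ_succ]
    simp only [ha, hlam, Fin.cons_zero, Fin.cons_succ, zero_mul, Real.exp_zero, mul_one]
    rw [← Finset.sum_add_distrib]
    refine Finset.sum_congr rfl fun j _ => ?_
    ring
  have hvan : ∀ x ∈ S, ∑ k, a k * Real.exp (lam k * x) = 0 := by
    intro x hx
    rw [hsum]
    rcases Finset.mem_insert.mp hx with rfl | hx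
    · simp
    · obtain ⟨i, _, rfl⟩ := Finset.mem_image.mp hx
      have : ∀ j, v j * (1 - Real.exp (-t j * μ i)) = M i j * v j := by
        intro j
        simp only [hM, Matrix.of_apply]
        ring_nf
      rw [Finset.sum_congr rfl (fun j _ => this j)]
      have := congrFun hMv i
      simpa [Matrix.mulVec, dotProduct] using this
  have hall := exp_sum_coeffs_eq_zero (L + 1) lam a hlaminj S hScard hvan
  apply hv
  funext j
  have := hall j.succ
  simpa [ha] using this
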